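/- Let K be a bounded subset of an affine plane in ℝ³ (for example, the geometric realization of a collection of STL triangles all of whose vertices lie in a common plane, such as a 'flattened cube' whose vertices all have third coordinate zero), and let p ∈ ℝ³ \ K. Then: (a) ℝ³ \ K is path-connected; (b) every point q ∈ K is reachable from p, i.e., there is a continuous path from p to q meeting K only at q. Consequently, the set O equals all of ℝ³ and the solid outer hull of K (the frontier of O) is empty: a flat model encloses no solid and is therefore not printable. -/

import Mathlib

set_option maxHeartbeats 1000000


noncomputable def segPath (a b : EuclideanSpace ℝ (Fin 3)) : Path a b where
  toFun t := (1 - (t : ℝ)) • a + (t : ℝ) • b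
  continuous_toFun := by fun_prop
  source' := by simp
  target' := by simp

lemma segPath_mem_range {a b x : EuclideanSpace ℝ (Fin 3)}
    (hx : x ∈ Set.range (segPath a b)) :
    ∃ t : ℝ, 0 ≤ t ∧ t ≤ 1 ∧ x = (1 - t) • a + t • b := by
  obtain ⟨t, rfl⟩ := hx
  exact ⟨t, t.2.1, t.2.2, rfl⟩

theorem connect_lemma (K : Set (EuclideanSpace ℝ (Fin 3)))
    (P : AffineSubspace ℝ (EuclideanSpace ℝ (Fin 3)))
    (hP : Module.finrank ℝ P.direction = 2) (hKP : K ⊆ (P : Set (EuclideanSpace ℝ (Fin 3))))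
    (hKbd : Bornology.IsBounded K) (a b : EuclideanSpace ℝ (Fin 3)) (ha : a ∉ K) :
    ∃ γ : Path a b, ∀ t : unitInterval, γ t ∈ K → γ t = b := by
  classical
  -- base point of the plane
  have hPne : P ≠ ⊥ := by
    intro h
    rw [h, AffineSubspace.direction_bot] at hP
    simp at hP
  obtain ⟨x₀, hx₀⟩ := (AffineSubspace.nonempty_iff_ne_bot P).mpr hPne
  -- a normal vector
  have hdir_ne_top : P.direction ≠ ⊤ := by
    intro h
    rw [h] at hP
    have h3 : Module.finrank ℝ (⊤ : Submodule ℝ (EuclideanSpace ℝ (Fin 3))) = 3 := by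
      simp [finrank_euclideanSpace_fin]
    omega
  have horth : P.directionᗮ ≠ ⊥ := fun h =>
    hdir_ne_top (Submodule.orthogonal_eq_bot_iff.mp h)
  obtain ⟨n, hn_mem, hn0⟩ := (Submodule.ne_bot_iff _).mp horth
  set c : ℝ := (inner ℝ n x₀ : ℝ) with hc
  set δ : ℝ := (inner ℝ n n : ℝ) with hδ
  have hδpos : 0 < δ := by
    rw [hδ, real_inner_self_eq_norm_sq]
    exact pow_pos (norm_pos_iff.mpr hn0) 2
  -- bound on K
  obtain ⟨R, hR⟩ := (Metric.isBounded_iff_subset_closedBall 0).mp hKbd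
  -- a long vector in the plane direction
  have hdir_ne_bot : P.direction ≠ ⊥ := by
    intro h
    rw [h] at hP
    simp at hP
  obtain ⟨v, hv_mem, hv0⟩ := (Submodule.ne_bot_iff _).mp hdir_ne_bot
  set M : ℝ := |R| + ‖x₀‖ + 1 with hM
  have hMpos : 0 < M := by positivity
  set w : EuclideanSpace ℝ (Fin 3) := (M / ‖v‖) • v with hw
  have hw_mem : w ∈ P.direction := P.direction.smul_mem _ hv_mem
  have hnormw : ‖w‖ = M := by
    rw [hw, norm_smul, Real.norm_eq_abs, abs_div, abs_of_pos hMpos, abs_norm,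
      div_mul_cancel₀ _ (norm_ne_zero_iff.mpr hv0)]
  have hnw : (inner ℝ n w : ℝ) = 0 := by
    rw [real_inner_comm]
    exact (Submodule.mem_orthogonal _ n).mp hn_mem w hw_mem
  -- facts about K
  have hKc : ∀ x ∈ K, (inner ℝ n x : ℝ) = c := by
    intro x hx
    have hxP := hKP hx
    have hsub : x -ᵥ x₀ ∈ P.direction := AffineSubspace.vsub_mem_direction hxP hx₀
    have h0 : (inner ℝ n (x - x₀) : ℝ) = 0 := by
      rw [real_inner_comm]
      exact (Submodule.mem_orthogonal _ n).mp hn_mem _ hsub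
    rw [inner_sub_right] at h0
    linarith [h0]
  have hKnorm : ∀ x ∈ K, ‖x‖ ≤ |R| := by
    intro x hx
    have := hR hx
    rw [Metric.mem_closedBall, dist_zero_right] at this
    exact this.trans (le_abs_self R)
  -- inner products of key points
  have g_add : ∀ y z : EuclideanSpace ℝ (Fin 3), (inner ℝ n (y + z) : ℝ) = (inner ℝ n y : ℝ) + (inner ℝ n z : ℝ) :=
    fun y z => inner_add_right _ _ _
  have g_seg : ∀ (y z : EuclideanSpace ℝ (Fin 3)) (t : ℝ),
      (inner ℝ n ((1 - t) • y + t • z) : ℝ) = (1 - t) * (inner ℝ n y : ℝ) + t * (inner ℝ n z : ℝ) := by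
    intro y z t
    rw [inner_add_right, real_inner_smul_right, real_inner_smul_right]
  -- hub path
  have hub : ∀ q : EuclideanSpace ℝ (Fin 3),
      ∃ γ : Path (x₀ + n) q, ∀ x ∈ Set.range γ, x ∈ K → x = q := by
    intro q
    have ghn : (inner ℝ n (x₀ + n) : ℝ) = c + δ := by rw [g_add]
    have ghwn : (inner ℝ n (x₀ + w + n) : ℝ) = c + δ := by rw [g_add, g_add, hnw]; ring
    have ghwn' : (inner ℝ n (x₀ + w - n) : ℝ) = c - δ := by
      rw [inner_sub_right, g_add, hnw]; ring
    have ghn' : (inner ℝ n (x₀ - n) : ℝ) = c - δ := by rw [inner_sub_right]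
    rcases le_or_gt c (inner ℝ n q : ℝ) with hq | hq
    · refine ⟨segPath (x₀ + n) q, ?_⟩
      intro x hx hxK
      obtain ⟨t, ht0, ht1, rfl⟩ := segPath_mem_range hx
      have hgx : (inner ℝ n ((1 - t) • (x₀ + n) + t • q) : ℝ) = c := hKc _ hxK
      rw [g_seg, ghn] at hgx
      have h1 : 0 ≤ t * ((inner ℝ n q : ℝ) - c) := mul_nonneg ht0 (by linarith)
      have h2 : (1 - t) * δ = -(t * ((inner ℝ n q : ℝ) - c)) := by linear_combination hgx
      have h3 : (1 - t) * δ = 0 := le_antisymm (by linarith) (mul_nonneg (by linarith) hδpos.le)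
      have ht : t = 1 := by
        rcases mul_eq_zero.mp h3 with h | h
        · linarith
        · exact absurd h hδpos.ne'
      rw [ht]
      simp
    · refine ⟨((segPath (x₀ + n) (x₀ + w + n)).trans
        (segPath (x₀ + w + n) (x₀ + w - n))).trans
        ((segPath (x₀ + w - n) (x₀ - n)).trans (segPath (x₀ - n) q)), ?_⟩
      intro x hx hxK
      exfalso
      rw [Path.trans_range, Path.trans_range, Path.trans_range] at hx
      have hgc : (inner ℝ n x : ℝ) = c := hKc _ hxK
      rcases hx with (hx | hx) | (hx | hx)
      · obtain ⟨t, ht0, ht1, rfl⟩ := segPath_mem_range hx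
        rw [g_seg, ghn, ghwn] at hgc
        have : δ = 0 := by linear_combination hgc
        exact hδpos.ne' this
      · obtain ⟨t, ht0, ht1, rfl⟩ := segPath_mem_range hx
        have hgc' := hgc
        rw [g_seg, ghwn, ghwn'] at hgc'
        have h5 : (1 - 2 * t) * δ = 0 := by linear_combination hgc'
        have ht : t = 1 / 2 := by
          rcases mul_eq_zero.mp h5 with h | h
          · linarith
          · exact absurd h hδpos.ne'
        subst ht
        have hxeq : (1 - (1 / 2 : ℝ)) • (x₀ + w + n) + (1 / 2 : ℝ) • (x₀ + w - n)
            = x₀ + w := by module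
        rw [hxeq] at hxK
        have h1 : ‖x₀ + w‖ ≤ |R| := hKnorm _ hxK
        have h2 : ‖w‖ ≤ ‖x₀ + w‖ + ‖x₀‖ := by
          calc ‖w‖ = ‖x₀ + w - x₀‖ := by congr 1; abel
          _ ≤ ‖x₀ + w‖ + ‖x₀‖ := norm_sub_le _ _
        rw [hnormw] at h2
        linarith [hM ▸ hMpos]
      · obtain ⟨t, ht0, ht1, rfl⟩ := segPath_mem_range hx
        rw [g_seg, ghwn', ghn'] at hgc
        have : δ = 0 := by linear_combination -hgc
        exact hδpos.ne' this
      · obtain ⟨t, ht0, ht1, rfl⟩ := segPath_mem_range hx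
        rw [g_seg, ghn'] at hgc
        have h1 : t * ((inner ℝ n q : ℝ) - c) ≤ 0 :=
          mul_nonpos_of_nonneg_of_nonpos ht0 (by linarith)
        have h2 : (1 - t) * δ = t * ((inner ℝ n q : ℝ) - c) := by linear_combination -hgc
        have h3 : (1 - t) * δ = 0 := le_antisymm (by linarith)
          (mul_nonneg (by linarith) hδpos.le)
        have ht : t = 1 := by
          rcases mul_eq_zero.mp h3 with h | h
          · linarith
          · exact absurd h hδpos.ne'
        have h4 : 0 = t * ((inner ℝ n q : ℝ) - c) := h3.symm.trans h2
        rcases mul_eq_zero.mp h4.symm with h | h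
        · linarith
        · linarith
  obtain ⟨γa, hγa⟩ := hub a
  obtain ⟨γb, hγb⟩ := hub b
  refine ⟨γa.symm.trans γb, ?_⟩
  intro t hmem
  have hx : (γa.symm.trans γb) t ∈ Set.range γa ∪ Set.range γb := by
    rw [← Path.symm_range γa, ← Path.trans_range]
    exact Set.mem_range_self t
  rcases hx with hx | hx
  · have h := hγa _ hx hmem
    rw [h] at hmem
    exact absurd hmem ha
  · exact hγb _ hx hmem

/-- `q` is reachable from `p` with respect to `K`: there is a continuous path from
`p` to `q` all of whose points lying in `K` equal `q`. -/
def ReachableFrom (K : Set (EuclideanSpace ℝ (Fin 3))) (p q : EuclideanSpace ℝ (Fin 3)) : Prop :=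
  ∃ γ : Path p q, ∀ t : unitInterval, γ t ∈ K → γ t = q

/-- A bounded subset `K` of an affine plane in ℝ³ (e.g. a 'flattened cube')
encloses no solid: (a) its complement is path-connected; (b) every point of `K`
is reachable from any external base point `p`; consequently the set
`O = pathComponentIn Kᶜ p ∪ {q ∈ K | reachable}` is all of ℝ³ and the solid outer
hull (the frontier of `O`) is empty — a flat model is not printable. -/
theorem flat_model_not_printable (K : Set (EuclideanSpace ℝ (Fin 3)))
    (P : AffineSubspace ℝ (EuclideanSpace ℝ (Fin 3)))
    (hP : Module.finrank ℝ P.direction = 2) (hKP : K ⊆ (P : Set (EuclideanSpace ℝ (Fin 3))))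
    (hKbd : Bornology.IsBounded K)
    (p : EuclideanSpace ℝ (Fin 3)) (hp : p ∉ K) :
    IsPathConnected Kᶜ ∧
    (∀ q ∈ K, ReachableFrom K p q) ∧
    pathComponentIn Kᶜ p ∪ {q ∈ K | ReachableFrom K p q} = Set.univ ∧
    frontier (pathComponentIn Kᶜ p ∪ {q ∈ K | ReachableFrom K p q}) = ∅ := by
  have key : ∀ a b : EuclideanSpace ℝ (Fin 3), a ∉ K →
      ∃ γ : Path a b, ∀ t : unitInterval, γ t ∈ K → γ t = b :=
    fun a b ha => connect_lemma K P hP hKP hKbd a b ha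
  have hpc : IsPathConnected Kᶜ := by
    refine ⟨p, hp, ?_⟩
    intro y hy
    obtain ⟨γ, hγ⟩ := key p y hp
    exact ⟨γ, fun t ht => hy ((hγ t ht) ▸ ht)⟩
  have hreach : ∀ q ∈ K, ReachableFrom K p q := fun q _ => key p q hp
  have huniv : pathComponentIn Kᶜ p ∪ {q ∈ K | ReachableFrom K p q} = Set.univ := by
    ext x
    simp only [Set.mem_univ, iff_true, Set.mem_union, Set.mem_setOf_eq]
    by_cases hx : x ∈ K
    · exact Or.inr ⟨hx, hreach x hx⟩
    · exact Or.inl (hpc.joinedIn p hp x hx)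
  exact ⟨hpc, hreach, huniv, by rw [huniv, frontier_univ]⟩
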